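/- Uniform Sobolev bound from linear higher-Sobolev growth plus algebraic L¹ relaxation (Fourier form). Let N ≥ 1 and k ≥ 0. For an integrable function h on ℝ^N and r ∈ ℝ, write ‖h‖²_{H^r} = ∫_{ℝ^N} (1+|ξ|²)^r |ĥ(ξ)|² dξ, where ĥ is the Fourier transform of h. Let M : ℝ^N → ℝ be integrable with ‖M‖_{H^k} < ∞ and ‖M‖_{H^{2k+(N+1)/2}} < ∞, and suppose g : [0,∞) → L¹(ℝ^N) satisfies, for some constants C₀, C₁ > 0 and all t ≥ 0: ‖g(t)‖_{H^{2k+(N+1)/2}} ≤ C₀(1+t) and ‖g(t) − M‖_{L¹} ≤ C₁(1+t)^{−1}. Then there exists a finite constant C(k) (explicitly computable from C₀, C₁, N, k and the norms of M) such that ‖g(t)‖_{H^k} ≤ C(k) for all t ≥ 0. -/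

import Mathlib

open MeasureTheory Real ENNReal FourierTransform

noncomputable section

/-- Euclidean space `ℝ^N`. -/
abbrev Rn (N : ℕ) := EuclideanSpace ℝ (Fin N)

/-- The Fourier transform `ĥ(ξ) = ∫ e^{-2πi v·ξ} h(v) dv` of a real-valued function. -/
def fourierT (N : ℕ) (h : Rn N → ℝ) : Rn N → ℂ := 𝓕 (fun v => (h v : ℂ))

/-- Sobolev norm of order `r ∈ ℝ` in Fourier form:
`‖h‖_{H^r} = (∫ (1+|ξ|²)^r |ĥ(ξ)|² dξ)^{1/2}`, valued in `[0,∞]`. -/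
def fHnorm (N : ℕ) (r : ℝ) (h : Rn N → ℝ) : ℝ≥0∞ :=
  (∫⁻ ξ : Rn N, ENNReal.ofReal ((1 + ‖ξ‖ ^ 2) ^ r * ‖fourierT N h ξ‖ ^ 2)) ^ (1/2 : ℝ)

private lemma ofReal_norm_eq_coe_nnnorm {E : Type*} [SeminormedAddGroup E] (x : E) :
    ENNReal.ofReal ‖x‖ = (‖x‖₊ : ℝ≥0∞) :=
  ENNReal.ofReal_eq_coe_nnreal (norm_nonneg x)

private lemma enn_two_mul_le (a b : ℝ≥0∞) (hab : a ≤ b) :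
    2 * (a * b) ≤ a ^ 2 + b ^ 2 := by
  obtain ⟨c, rfl⟩ : ∃ c, b = a + c := ⟨b - a, by rw [add_comm, tsub_add_cancel_of_le hab]⟩
  calc 2 * (a * (a + c)) = 2 * a ^ 2 + 2 * (a * c) := by ring
    _ ≤ 2 * a ^ 2 + 2 * (a * c) + c ^ 2 := le_self_add
    _ = a ^ 2 + (a + c) ^ 2 := by ring

private lemma enn_sq_sum_le (a b : ℝ≥0∞) : (a + b) ^ 2 ≤ 2 * a ^ 2 + 2 * b ^ 2 := by
  have h : 2 * (a * b) ≤ a ^ 2 + b ^ 2 := by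
    rcases le_total a b with h | h
    · exact enn_two_mul_le a b h
    · rw [mul_comm a b]
      have := enn_two_mul_le b a h
      calc 2 * (b * a) ≤ b ^ 2 + a ^ 2 := this
        _ = a ^ 2 + b ^ 2 := add_comm _ _
  calc (a + b) ^ 2 = a ^ 2 + b ^ 2 + 2 * (a * b) := by ring
    _ ≤ a ^ 2 + b ^ 2 + (a ^ 2 + b ^ 2) := by gcongr
    _ = 2 * a ^ 2 + 2 * b ^ 2 := by ring

private lemma enn_sqrt_sq (c : ℝ≥0∞) : (c ^ 2) ^ (1/2 : ℝ) = c := by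
  rw [← ENNReal.rpow_natCast c 2, ← ENNReal.rpow_mul]
  norm_num

private lemma enn_le_sq_of_rpow_half_le {x y : ℝ≥0∞} (h : x ^ (1/2 : ℝ) ≤ y) : x ≤ y ^ 2 := by
  calc x = (x ^ (1/2 : ℝ)) ^ 2 := by
        rw [← ENNReal.rpow_natCast (x ^ (1/2:ℝ)) 2, ← ENNReal.rpow_mul]; norm_num
    _ ≤ y ^ 2 := by gcongr
    _ = y ^ 2 := rfl

private lemma enn_lt_top_of_rpow_half {x : ℝ≥0∞} (h : x ^ (1/2 : ℝ) < ⊤) : x < ⊤ := by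
  by_contra hx
  rw [not_lt, top_le_iff] at hx
  subst hx
  rw [ENNReal.top_rpow_of_pos (by norm_num)] at h
  exact (lt_irrefl _ h)

/-- **Uniform Sobolev bound from linear higher-Sobolev growth plus algebraic `L¹`
relaxation** (Fourier form): if `‖g(t)‖_{H^{2k+(N+1)/2}} ≤ C₀(1+t)` and
`‖g(t) - M‖_{L¹} ≤ C₁(1+t)⁻¹` with `M` having finite `H^k` and `H^{2k+(N+1)/2}` norms,
then `‖g(t)‖_{H^k}` is bounded uniformly in time. -/
theorem uniform_sobolev_from_growth_and_relaxation
    (N : ℕ) (hN : 1 ≤ N) (k : ℝ) (hk : 0 ≤ k)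
    (M : Rn N → ℝ) (hMint : Integrable M)
    (hMk : fHnorm N k M < ⊤) (hMbig : fHnorm N (2 * k + ((N : ℝ) + 1) / 2) M < ⊤)
    (g : ℝ → Rn N → ℝ) (hgint : ∀ t : ℝ, 0 ≤ t → Integrable (g t))
    (C₀ C₁ : ℝ) (hC₀ : 0 < C₀) (hC₁ : 0 < C₁)
    (hgrow : ∀ t : ℝ, 0 ≤ t →
      fHnorm N (2 * k + ((N : ℝ) + 1) / 2) (g t) ≤ ENNReal.ofReal (C₀ * (1 + t)))
    (hrelax : ∀ t : ℝ, 0 ≤ t →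
      (∫⁻ v : Rn N, ENNReal.ofReal |g t v - M v|) ≤ ENNReal.ofReal (C₁ * (1 + t)⁻¹)) :
    ∃ C : ℝ, 0 < C ∧ ∀ t : ℝ, 0 ≤ t → fHnorm N k (g t) ≤ ENNReal.ofReal C := by
  classical
  set b : ℝ := 2 * k + ((N : ℝ) + 1) / 2 with hb_def
  set a : ℝ := -(((N : ℝ) + 1) / 2) with ha_def
  have hab : a + b = 2 * k := by rw [ha_def, hb_def]; ring
  set X : Rn N → ℝ≥0∞ := fun ξ => ENNReal.ofReal (1 + ‖ξ‖ ^ 2) with hX_def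
  have hX1 : ∀ ξ : Rn N, (0:ℝ) < 1 + ‖ξ‖ ^ 2 := fun ξ => by positivity
  have hX0 : ∀ ξ, X ξ ≠ 0 := fun ξ => (ENNReal.ofReal_pos.mpr (hX1 ξ)).ne'
  have hXt : ∀ ξ, X ξ ≠ ⊤ := fun ξ => ENNReal.ofReal_ne_top
  have mX : Measurable X :=
    ENNReal.measurable_ofReal.comp (continuous_const.add (continuous_norm.pow 2)).measurable
  set J : ℝ → (Rn N → ℝ) → ℝ≥0∞ :=
    fun r h => ∫⁻ ξ, X ξ ^ r * (‖fourierT N h ξ‖₊ : ℝ≥0∞) ^ 2 with hJ_def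
  -- fHnorm in terms of J
  have hfH : ∀ (r : ℝ) (h : Rn N → ℝ), fHnorm N r h = (J r h) ^ (1/2 : ℝ) := by
    intro r h
    unfold fHnorm
    congr 1
    refine lintegral_congr fun ξ => ?_
    rw [ENNReal.ofReal_mul (Real.rpow_nonneg (hX1 ξ).le r),
      ← ENNReal.ofReal_rpow_of_pos (hX1 ξ),
      ENNReal.ofReal_pow (norm_nonneg _), ofReal_norm_eq_coe_nnnorm]
  -- continuity / measurability of Fourier transforms
  have hcont : ∀ (h : Rn N → ℝ), Integrable h → Continuous (fourierT N h) := by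
    intro h hh
    exact VectorFourier.fourierIntegral_continuous Real.continuous_fourierChar
      (by exact continuous_inner) hh.ofReal
  have mF : ∀ (h : Rn N → ℝ), Integrable h →
      Measurable fun ξ => (‖fourierT N h ξ‖₊ : ℝ≥0∞) :=
    fun h hh => ((hcont h hh).measurable.nnnorm).coe_nnreal_ennreal
  have mJ : ∀ (r : ℝ) (h : Rn N → ℝ), Integrable h →
      Measurable fun ξ => X ξ ^ r * (‖fourierT N h ξ‖₊ : ℝ≥0∞) ^ 2 :=
    fun r h hh => ((ENNReal.continuous_rpow_const.measurable).comp mX).mul ((mF h hh).pow_const 2)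
  -- linearity of the Fourier transform
  have hTadd : ∀ (h₁ h₂ : Rn N → ℝ), Integrable h₁ → Integrable h₂ →
      fourierT N (fun v => h₁ v + h₂ v) = fourierT N h₁ + fourierT N h₂ := by
    intro h₁ h₂ hi1 hi2
    have key : 𝓕 ((fun v : Rn N => ((h₁ v : ℂ))) + fun v : Rn N => ((h₂ v : ℂ)))
        = 𝓕 (fun v : Rn N => ((h₁ v : ℂ))) + 𝓕 (fun v : Rn N => ((h₂ v : ℂ))) :=
      VectorFourier.fourierIntegral_add Real.continuous_fourierChar
        (by exact continuous_inner :
          Continuous fun p : Rn N × Rn N => innerₗ (Rn N) p.1 p.2)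
        hi1.ofReal hi2.ofReal
    unfold fourierT
    rw [show (fun v : Rn N => ((h₁ v + h₂ v : ℝ) : ℂ))
        = (fun v : Rn N => ((h₁ v : ℂ))) + fun v : Rn N => ((h₂ v : ℂ)) by
      funext v; simp, key]
  -- L¹ bound on the Fourier transform
  have hL1 : ∀ (h : Rn N → ℝ), Integrable h → ∀ ξ,
      (‖fourierT N h ξ‖₊ : ℝ≥0∞) ≤ ∫⁻ v, ENNReal.ofReal |h v| := by
    intro h hh ξ
    have h1 : ‖fourierT N h ξ‖ ≤ ∫ v, ‖((h v : ℂ))‖ :=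
      VectorFourier.norm_fourierIntegral_le_integral_norm _ _ _ _ _
    have h2 : (∫ v, ‖((h v : ℂ))‖) = ∫ v, |h v| := by
      simp [Complex.norm_real, Real.norm_eq_abs]
    rw [← ofReal_norm_eq_coe_nnnorm]
    calc ENNReal.ofReal ‖fourierT N h ξ‖ ≤ ENNReal.ofReal (∫ v, |h v|) :=
          ENNReal.ofReal_le_ofReal (h2 ▸ h1)
      _ = ∫⁻ v, ENNReal.ofReal |h v| :=
          ofReal_integral_eq_lintegral_ofReal hh.abs
            (Filter.Eventually.of_forall fun v => abs_nonneg _)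
  -- finiteness of the Japanese bracket integral
  set IN : ℝ≥0∞ := ∫⁻ ξ : Rn N, X ξ ^ a with hIN_def
  have hae : a = (-((N:ℝ) + 1)) / 2 := by rw [ha_def]; ring
  have hIN_lt : IN < ⊤ := by
    have hint : Integrable (fun ξ : Rn N => ((1:ℝ) + ‖ξ‖ ^ 2) ^ ((-((N:ℝ) + 1)) / 2))
        (volume) := by
      apply integrable_rpow_neg_one_add_norm_sq
      rw [finrank_euclideanSpace_fin]
      exact_mod_cast lt_add_one (N:ℝ)
    calc IN = ∫⁻ ξ : Rn N, ENNReal.ofReal ((1 + ‖ξ‖ ^ 2) ^ a) :=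
          lintegral_congr fun ξ => (ENNReal.ofReal_rpow_of_pos (hX1 ξ))
      _ ≤ ∫⁻ ξ : Rn N, (‖((1:ℝ) + ‖ξ‖ ^ 2) ^ ((-((N:ℝ) + 1)) / 2)‖₊ : ℝ≥0∞) := by
          refine lintegral_mono fun ξ => ?_
          rw [← ofReal_norm_eq_coe_nnnorm, hae]
          exact ENNReal.ofReal_le_ofReal (le_abs_self _)
      _ < ⊤ := hint.2
  -- pointwise splitting for Cauchy–Schwarz
  have hsplit : ∀ (h : Rn N → ℝ) (ξ : Rn N),
      X ξ ^ k * (‖fourierT N h ξ‖₊ : ℝ≥0∞) ^ 2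
        = (X ξ ^ a * (‖fourierT N h ξ‖₊ : ℝ≥0∞) ^ 2) ^ (1/2:ℝ)
          * (X ξ ^ b * (‖fourierT N h ξ‖₊ : ℝ≥0∞) ^ 2) ^ (1/2:ℝ) := by
    intro h ξ
    set c : ℝ≥0∞ := (‖fourierT N h ξ‖₊ : ℝ≥0∞)
    rw [ENNReal.mul_rpow_of_nonneg _ _ (by norm_num : (0:ℝ) ≤ 1/2),
      ENNReal.mul_rpow_of_nonneg _ _ (by norm_num : (0:ℝ) ≤ 1/2),
      enn_sqrt_sq, mul_mul_mul_comm, ← ENNReal.rpow_mul, ← ENNReal.rpow_mul,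
      ← ENNReal.rpow_add _ _ (hX0 ξ) (hXt ξ), ← sq]
    congr 1
    congr 1
    linarith [hab]
  -- Cauchy–Schwarz
  have hCS : ∀ (h : Rn N → ℝ), Integrable h →
      J k h ≤ (J a h) ^ (1/2:ℝ) * (J b h) ^ (1/2:ℝ) := by
    intro h hh
    have hpq : Real.HolderConjugate 2 2 := Real.HolderConjugate.two_two
    have hm : ∀ r : ℝ, AEMeasurable
        (fun ξ => (X ξ ^ r * (‖fourierT N h ξ‖₊ : ℝ≥0∞) ^ 2) ^ (1/2:ℝ)) volume :=
      fun r => ((ENNReal.continuous_rpow_const.measurable).comp (mJ r h hh)).aemeasurable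
    have hpow : ∀ r : ℝ, ∀ ξ : Rn N,
        ((X ξ ^ r * (‖fourierT N h ξ‖₊ : ℝ≥0∞) ^ 2) ^ (1/2:ℝ)) ^ (2:ℝ)
          = X ξ ^ r * (‖fourierT N h ξ‖₊ : ℝ≥0∞) ^ 2 := by
      intro r ξ
      rw [← ENNReal.rpow_mul]
      norm_num
    calc J k h = ∫⁻ ξ, ((fun ξ => (X ξ ^ a * (‖fourierT N h ξ‖₊ : ℝ≥0∞) ^ 2) ^ (1/2:ℝ))
          * fun ξ => (X ξ ^ b * (‖fourierT N h ξ‖₊ : ℝ≥0∞) ^ 2) ^ (1/2:ℝ)) ξ := by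
          refine lintegral_congr fun ξ => ?_
          simp only [Pi.mul_apply]
          exact hsplit h ξ
      _ ≤ (∫⁻ ξ, ((X ξ ^ a * (‖fourierT N h ξ‖₊ : ℝ≥0∞) ^ 2) ^ (1/2:ℝ)) ^ (2:ℝ)) ^ (1/(2:ℝ))
          * (∫⁻ ξ, ((X ξ ^ b * (‖fourierT N h ξ‖₊ : ℝ≥0∞) ^ 2) ^ (1/2:ℝ)) ^ (2:ℝ)) ^ (1/(2:ℝ)) :=
          ENNReal.lintegral_mul_le_Lp_mul_Lq volume hpq (hm a) (hm b)
      _ = (J a h) ^ (1/2:ℝ) * (J b h) ^ (1/2:ℝ) := by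
          congr 1
          · congr 1
            exact lintegral_congr fun ξ => hpow a ξ
          · congr 1
            exact lintegral_congr fun ξ => hpow b ξ
  -- quadratic triangle inequality for J
  have hJle : ∀ (r : ℝ) (u v w : Rn N → ℝ), Integrable v → Integrable w →
      (∀ ξ, (‖fourierT N u ξ‖₊ : ℝ≥0∞) ≤ ‖fourierT N v ξ‖₊ + ‖fourierT N w ξ‖₊) →
      J r u ≤ 2 * J r v + 2 * J r w := by
    intro r u v w hv hw hle
    calc J r u ≤ ∫⁻ ξ, (2 * (X ξ ^ r * (‖fourierT N v ξ‖₊ : ℝ≥0∞) ^ 2)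
          + 2 * (X ξ ^ r * (‖fourierT N w ξ‖₊ : ℝ≥0∞) ^ 2)) := by
          refine lintegral_mono fun ξ => ?_
          calc X ξ ^ r * (‖fourierT N u ξ‖₊ : ℝ≥0∞) ^ 2
              ≤ X ξ ^ r * ((‖fourierT N v ξ‖₊ : ℝ≥0∞) + (‖fourierT N w ξ‖₊ : ℝ≥0∞)) ^ 2 := by
                gcongr
                exact hle ξ
            _ ≤ X ξ ^ r * (2 * (‖fourierT N v ξ‖₊ : ℝ≥0∞) ^ 2
                + 2 * (‖fourierT N w ξ‖₊ : ℝ≥0∞) ^ 2) := by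
                gcongr
                exact enn_sq_sum_le _ _
            _ = 2 * (X ξ ^ r * (‖fourierT N v ξ‖₊ : ℝ≥0∞) ^ 2)
                + 2 * (X ξ ^ r * (‖fourierT N w ξ‖₊ : ℝ≥0∞) ^ 2) := by ring
      _ = 2 * J r v + 2 * J r w := by
          rw [lintegral_add_left ((mJ r v hv).const_mul 2),
            lintegral_const_mul' _ _ (by norm_num : (2:ℝ≥0∞) ≠ ⊤),
            lintegral_const_mul' _ _ (by norm_num : (2:ℝ≥0∞) ≠ ⊤)]
  -- finite constants
  have hJbM_lt : J b M < ⊤ := by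
    rw [hfH] at hMbig
    exact enn_lt_top_of_rpow_half hMbig
  have hJkM_lt : J k M < ⊤ := by
    rw [hfH] at hMk
    exact enn_lt_top_of_rpow_half hMk
  set D1 : ℝ≥0∞ := 2 * (ENNReal.ofReal (C₁ * C₀)) ^ 2
      + 2 * (ENNReal.ofReal C₁) ^ 2 * J b M with hD1_def
  have hD1_lt : D1 < ⊤ := by
    rw [hD1_def]
    refine ENNReal.add_lt_top.mpr ⟨?_, ?_⟩
    · exact ENNReal.mul_lt_top (by norm_num) (ENNReal.pow_lt_top ENNReal.ofReal_lt_top)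
    · exact ENNReal.mul_lt_top
        (ENNReal.mul_lt_top (by norm_num) (ENNReal.pow_lt_top ENNReal.ofReal_lt_top)) hJbM_lt
  set D : ℝ≥0∞ := 2 * (IN * D1) ^ (1/2:ℝ) + 2 * J k M with hD_def
  have hD_lt : D < ⊤ := by
    rw [hD_def]
    refine ENNReal.add_lt_top.mpr ⟨?_, ENNReal.mul_lt_top (by norm_num) hJkM_lt⟩
    refine ENNReal.mul_lt_top (by norm_num) ?_
    exact ENNReal.rpow_lt_top_of_nonneg (by norm_num)
      (ENNReal.mul_lt_top hIN_lt hD1_lt).ne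
  have hDh_ne : D ^ (1/2:ℝ) ≠ ⊤ :=
    (ENNReal.rpow_lt_top_of_nonneg (by norm_num) hD_lt.ne).ne
  refine ⟨(D ^ (1/2:ℝ)).toReal + 1, by positivity, ?_⟩
  intro t ht
  have h1t : (0:ℝ) < 1 + t := by linarith
  set h : Rn N → ℝ := fun v => g t v - M v with hh_def
  have hhint : Integrable h := (hgint t ht).sub hMint
  have hgMT : fourierT N (g t) = fourierT N h + fourierT N M := by
    have hsum := hTadd h M hhint hMint
    rw [show (fun v => h v + M v) = g t by funext v; simp [hh_def]] at hsum
    exact hsum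
  have hFg_le : ∀ ξ, (‖fourierT N (g t) ξ‖₊ : ℝ≥0∞)
      ≤ ‖fourierT N h ξ‖₊ + ‖fourierT N M ξ‖₊ := by
    intro ξ
    rw [hgMT]
    simp only [Pi.add_apply]
    exact_mod_cast nnnorm_add_le _ _
  have hFh_le : ∀ ξ, (‖fourierT N h ξ‖₊ : ℝ≥0∞)
      ≤ ‖fourierT N (g t) ξ‖₊ + ‖fourierT N M ξ‖₊ := by
    intro ξ
    have : fourierT N h ξ = fourierT N (g t) ξ - fourierT N M ξ := by
      rw [hgMT]; simp only [Pi.add_apply]; ring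
    rw [this]
    exact_mod_cast nnnorm_sub_le _ _
  -- small-exponent bound
  have hJah : J a h ≤ (ENNReal.ofReal (C₁ * (1 + t)⁻¹)) ^ 2 * IN := by
    have hFb : ∀ ξ, (‖fourierT N h ξ‖₊ : ℝ≥0∞) ≤ ENNReal.ofReal (C₁ * (1 + t)⁻¹) :=
      fun ξ => (hL1 h hhint ξ).trans (hrelax t ht)
    calc J a h ≤ ∫⁻ ξ, (ENNReal.ofReal (C₁ * (1 + t)⁻¹)) ^ 2 * X ξ ^ a := by
          refine lintegral_mono fun ξ => ?_
          calc X ξ ^ a * (‖fourierT N h ξ‖₊ : ℝ≥0∞) ^ 2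
              ≤ X ξ ^ a * (ENNReal.ofReal (C₁ * (1 + t)⁻¹)) ^ 2 := by
                gcongr
                exact hFb ξ
            _ = (ENNReal.ofReal (C₁ * (1 + t)⁻¹)) ^ 2 * X ξ ^ a := mul_comm _ _
      _ = (ENNReal.ofReal (C₁ * (1 + t)⁻¹)) ^ 2 * IN :=
          lintegral_const_mul' _ _ (ENNReal.pow_ne_top ENNReal.ofReal_ne_top)
  -- big-exponent bound
  have hJbg : J b (g t) ≤ (ENNReal.ofReal (C₀ * (1 + t))) ^ 2 := by
    have := hgrow t ht
    rw [hfH] at this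
    exact enn_le_sq_of_rpow_half_le this
  have hJbh : J b h ≤ 2 * (ENNReal.ofReal (C₀ * (1 + t))) ^ 2 + 2 * J b M := by
    calc J b h ≤ 2 * J b (g t) + 2 * J b M := hJle b h (g t) M (hgint t ht) hMint hFh_le
      _ ≤ 2 * (ENNReal.ofReal (C₀ * (1 + t))) ^ 2 + 2 * J b M := by gcongr
  -- key uniform product bound
  have hkey : (ENNReal.ofReal (C₁ * (1 + t)⁻¹)) ^ 2
      * (2 * (ENNReal.ofReal (C₀ * (1 + t))) ^ 2 + 2 * J b M) ≤ D1 := by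
    have e1 : ENNReal.ofReal (C₁ * (1 + t)⁻¹) * ENNReal.ofReal (C₀ * (1 + t))
        = ENNReal.ofReal (C₁ * C₀) := by
      rw [← ENNReal.ofReal_mul (by positivity)]
      congr 1
      field_simp
    have e2 : ENNReal.ofReal (C₁ * (1 + t)⁻¹) ≤ ENNReal.ofReal C₁ := by
      apply ENNReal.ofReal_le_ofReal
      have hinv : (1 + t)⁻¹ ≤ 1 := by
        rw [inv_le_one_iff₀]
        right; linarith
      calc C₁ * (1 + t)⁻¹ ≤ C₁ * 1 := by
            exact mul_le_mul_of_nonneg_left hinv hC₁.le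
        _ = C₁ := mul_one _
    calc (ENNReal.ofReal (C₁ * (1 + t)⁻¹)) ^ 2
        * (2 * (ENNReal.ofReal (C₀ * (1 + t))) ^ 2 + 2 * J b M)
        = 2 * (ENNReal.ofReal (C₁ * (1 + t)⁻¹) * ENNReal.ofReal (C₀ * (1 + t))) ^ 2
          + 2 * (ENNReal.ofReal (C₁ * (1 + t)⁻¹)) ^ 2 * J b M := by ring
      _ ≤ 2 * (ENNReal.ofReal (C₁ * C₀)) ^ 2 + 2 * (ENNReal.ofReal C₁) ^ 2 * J b M := by
          rw [e1]
          gcongr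
      _ = D1 := by rw [hD1_def]
  -- interpolation bound on h
  have hJkh : J k h ≤ (IN * D1) ^ (1/2:ℝ) := by
    calc J k h ≤ (J a h) ^ (1/2:ℝ) * (J b h) ^ (1/2:ℝ) := hCS h hhint
      _ ≤ ((ENNReal.ofReal (C₁ * (1 + t)⁻¹)) ^ 2 * IN) ^ (1/2:ℝ)
          * ((2 * (ENNReal.ofReal (C₀ * (1 + t))) ^ 2 + 2 * J b M)) ^ (1/2:ℝ) := by
          gcongr <;> first | exact hJah | exact hJbh | skip
      _ = ((ENNReal.ofReal (C₁ * (1 + t)⁻¹)) ^ 2 * IN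
          * (2 * (ENNReal.ofReal (C₀ * (1 + t))) ^ 2 + 2 * J b M)) ^ (1/2:ℝ) :=
          (ENNReal.mul_rpow_of_nonneg _ _ (by norm_num)).symm
      _ = (IN * ((ENNReal.ofReal (C₁ * (1 + t)⁻¹)) ^ 2
          * (2 * (ENNReal.ofReal (C₀ * (1 + t))) ^ 2 + 2 * J b M))) ^ (1/2:ℝ) := by
          congr 1
          ring
      _ ≤ (IN * D1) ^ (1/2:ℝ) := by
          gcongr
  -- conclusion
  have hJkg : J k (g t) ≤ D := by
    calc J k (g t) ≤ 2 * J k h + 2 * J k M := hJle k (g t) h M hhint hMint hFg_le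
      _ ≤ 2 * (IN * D1) ^ (1/2:ℝ) + 2 * J k M := by gcongr
      _ = D := by rw [hD_def]
  rw [hfH]
  calc (J k (g t)) ^ (1/2:ℝ) ≤ D ^ (1/2:ℝ) := ENNReal.rpow_le_rpow hJkg (by norm_num)
    _ = ENNReal.ofReal ((D ^ (1/2:ℝ)).toReal) := (ENNReal.ofReal_toReal hDh_ne).symm
    _ ≤ ENNReal.ofReal ((D ^ (1/2:ℝ)).toReal + 1) :=
        ENNReal.ofReal_le_ofReal (by linarith)
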